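/- Let θ_1, …, θ_N ∈ ℝ^d, ψ = Σ_{i=1}^N w_i θ_i, g = Σ_{i=1}^N w_i ∇L_i(θ_i), and 0 < η ≤ 1/(4L). Then ‖ψ − ηg − θ*‖² ≤ (1 − ημ)‖ψ − θ*‖² + Σ_{i=1}^N w_i ‖ψ − θ_i‖² + 4η²L Σ_{i=1}^N w_i (L_i(θ_i) − L_i(θ_i*)) − 2η Σ_{i=1}^N w_i (L_i(θ_i) − L_i(θ*)). -/
import Mathlib

open scoped BigOperators RealInnerProductSpace

lemma jensen_norm_sq {d N : ℕ} (w : Fin N → ℝ) (hw : ∀ i, 0 ≤ w i)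
    (hw1 : ∑ i, w i = 1) (v : Fin N → EuclideanSpace ℝ (Fin d)) :
    ‖∑ i, w i • v i‖ ^ 2 ≤ ∑ i, w i * ‖v i‖ ^ 2 := by
  calc ‖∑ i, w i • v i‖ ^ 2 ≤ (∑ i, w i * ‖v i‖) ^ 2 := by
        apply pow_le_pow_left₀ (norm_nonneg _)
        calc ‖∑ i, w i • v i‖ ≤ ∑ i, ‖w i • v i‖ := norm_sum_le _ _
          _ = ∑ i, w i * ‖v i‖ := by
              refine Finset.sum_congr rfl fun i _ => ?_
              rw [norm_smul, Real.norm_eq_abs, abs_of_nonneg (hw i)]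
    _ ≤ ∑ i, w i * ‖v i‖ ^ 2 :=
        Real.pow_arith_mean_le_arith_mean_pow Finset.univ w (fun i => ‖v i‖)
          (fun i _ => hw i) hw1 (fun i _ => norm_nonneg _) 2

lemma grad_sq_le {d : ℕ} (f : EuclideanSpace ℝ (Fin d) → ℝ) (Lc : ℝ) (hLc : 0 < Lc)
    (hsmooth : ∀ x y, f y ≤ f x + ⟪gradient f x, y - x⟫ + Lc / 2 * ‖y - x‖ ^ 2)
    (xstar : EuclideanSpace ℝ (Fin d)) (hstar : ∀ x, f xstar ≤ f x)
    (x : EuclideanSpace ℝ (Fin d)) :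
    ‖gradient f x‖ ^ 2 ≤ 2 * Lc * (f x - f xstar) := by
  set v := gradient f x
  have h := hsmooth x (x - Lc⁻¹ • v)
  have hxy : x - Lc⁻¹ • v - x = -(Lc⁻¹ • v) := by abel
  rw [hxy] at h
  have hinner : ⟪v, -(Lc⁻¹ • v)⟫ = -(Lc⁻¹ * ‖v‖ ^ 2) := by
    rw [inner_neg_right, real_inner_smul_right, real_inner_self_eq_norm_sq]
  have hnorm : ‖-(Lc⁻¹ • v)‖ ^ 2 = Lc⁻¹ ^ 2 * ‖v‖ ^ 2 := by
    rw [norm_neg, norm_smul, mul_pow, Real.norm_eq_abs, sq_abs]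
  rw [hinner, hnorm] at h
  have h2 := hstar (x - Lc⁻¹ • v)
  have hLc' : Lc ≠ 0 := ne_of_gt hLc
  have : f xstar ≤ f x - 1 / (2 * Lc) * ‖v‖ ^ 2 := by
    calc f xstar ≤ f x + -(Lc⁻¹ * ‖v‖ ^ 2) + Lc / 2 * (Lc⁻¹ ^ 2 * ‖v‖ ^ 2) := le_trans h2 h
      _ = f x - 1 / (2 * Lc) * ‖v‖ ^ 2 := by field_simp; ring
  have := mul_le_mul_of_nonneg_left (sub_nonneg.mpr this) (le_of_lt (by positivity : (0:ℝ) < 2 * Lc))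
  calc ‖v‖ ^ 2 = 2 * Lc * (1 / (2 * Lc) * ‖v‖ ^ 2) := by field_simp
    _ ≤ 2 * Lc * (f x - f xstar) := by
        apply mul_le_mul_of_nonneg_left _ (by positivity)
        linarith [this]

/-- Intermediate one-step bound (eq. (29) in the paper's appendix). -/
theorem stmt5 {d N : ℕ} (hN : 1 ≤ N)
    (Lf : Fin N → EuclideanSpace ℝ (Fin d) → ℝ)
    (Lc μ : ℝ) (hμ : 0 < μ) (hμL : μ ≤ Lc)
    (hdiff : ∀ i, Differentiable ℝ (Lf i))
    (hsmooth : ∀ i x y, Lf i y ≤ Lf i x + ⟪gradient (Lf i) x, y - x⟫ + Lc / 2 * ‖y - x‖ ^ 2)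
    (hconv : ∀ i x y, Lf i y ≥ Lf i x + ⟪gradient (Lf i) x, y - x⟫ + μ / 2 * ‖y - x‖ ^ 2)
    (w : Fin N → ℝ) (hw : ∀ i, w i ∈ Set.Ioo (0 : ℝ) 1) (hw1 : ∑ i, w i = 1)
    (θstar : EuclideanSpace ℝ (Fin d))
    (hθstar : ∀ x, ∑ i, w i * Lf i θstar ≤ ∑ i, w i * Lf i x)
    (θistar : Fin N → EuclideanSpace ℝ (Fin d))
    (hθistar : ∀ i x, Lf i (θistar i) ≤ Lf i x)
    (θ : Fin N → EuclideanSpace ℝ (Fin d))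
    (ψ g : EuclideanSpace ℝ (Fin d))
    (hψ : ψ = ∑ i, w i • θ i)
    (hg : g = ∑ i, w i • gradient (Lf i) (θ i))
    (η : ℝ) (hη : 0 < η) (hη' : η ≤ 1 / (4 * Lc)) :
    ‖ψ - η • g - θstar‖ ^ 2 ≤
      (1 - η * μ) * ‖ψ - θstar‖ ^ 2 + (∑ i, w i * ‖ψ - θ i‖ ^ 2)
        + 4 * η ^ 2 * Lc * (∑ i, w i * (Lf i (θ i) - Lf i (θistar i)))
        - 2 * η * ∑ i, w i * (Lf i (θ i) - Lf i θstar) := by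
  have hLc : 0 < Lc := lt_of_lt_of_le hμ hμL
  have hwpos : ∀ i, 0 ≤ w i := fun i => le_of_lt (hw i).1
  set v : Fin N → EuclideanSpace ℝ (Fin d) := fun i => gradient (Lf i) (θ i) with hv
  -- gradient norm bound
  have h3 : ∀ i, ‖v i‖ ^ 2 ≤ 2 * Lc * (Lf i (θ i) - Lf i (θistar i)) := fun i =>
    grad_sq_le (Lf i) Lc hLc (hsmooth i) (θistar i) (hθistar i) (θ i)
  -- per-index key inequality
  have key : ∀ i, w i * (-(2 * η) * ⟪v i, ψ - θstar⟫) ≤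
      w i * (2 * η ^ 2 * Lc * (Lf i (θ i) - Lf i (θistar i)) + ‖ψ - θ i‖ ^ 2
        - 2 * η * (Lf i (θ i) - Lf i θstar) - η * μ * ‖θ i - θstar‖ ^ 2) := by
    intro i
    apply mul_le_mul_of_nonneg_left _ (hwpos i)
    have split : ⟪v i, ψ - θstar⟫ = ⟪v i, ψ - θ i⟫ + ⟪v i, θ i - θstar⟫ := by
      rw [← inner_add_right]; congr 1; abel
    have h1 : 2 * η * ⟪v i, θ i - ψ⟫ ≤ η ^ 2 * ‖v i‖ ^ 2 + ‖ψ - θ i‖ ^ 2 := by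
      have h0 : (0:ℝ) ≤ ‖η • v i - (θ i - ψ)‖ ^ 2 := sq_nonneg _
      rw [norm_sub_sq_real, real_inner_smul_left] at h0
      have hn : ‖η • v i‖ ^ 2 = η ^ 2 * ‖v i‖ ^ 2 := by
        rw [norm_smul, mul_pow, Real.norm_eq_abs, sq_abs]
      rw [hn] at h0
      have hrev : ‖θ i - ψ‖ = ‖ψ - θ i‖ := norm_sub_rev _ _
      rw [hrev] at h0
      linarith
    have h2 : ⟪v i, θ i - θstar⟫ ≥ (Lf i (θ i) - Lf i θstar) + μ / 2 * ‖θ i - θstar‖ ^ 2 := by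
      have hc := hconv i (θ i) θstar
      have : ⟪v i, θstar - θ i⟫ = -⟪v i, θ i - θstar⟫ := by
        rw [← inner_neg_right]; congr 1; abel
      rw [this] at hc
      have hrev : ‖θstar - θ i‖ = ‖θ i - θstar‖ := norm_sub_rev _ _
      rw [hrev] at hc
      linarith
    have hip : ⟪v i, ψ - θ i⟫ = -⟪v i, θ i - ψ⟫ := by
      rw [← inner_neg_right]; congr 1; abel
    have hvsq := h3 i
    have e1 := mul_le_mul_of_nonneg_left h2 (by positivity : (0:ℝ) ≤ 2 * η)
    have e2 := mul_le_mul_of_nonneg_left hvsq (sq_nonneg η)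
    rw [split, hip]
    linarith [h1, e1, e2]
  -- Jensen inequalities
  have hgbound : ‖g‖ ^ 2 ≤ ∑ i, w i * ‖v i‖ ^ 2 := by
    rw [hg]; exact jensen_norm_sq w hwpos hw1 v
  have hgbound2 : ‖g‖ ^ 2 ≤ 2 * Lc * ∑ i, w i * (Lf i (θ i) - Lf i (θistar i)) := by
    calc ‖g‖ ^ 2 ≤ ∑ i, w i * ‖v i‖ ^ 2 := hgbound
      _ ≤ ∑ i, w i * (2 * Lc * (Lf i (θ i) - Lf i (θistar i))) :=
          Finset.sum_le_sum fun i _ => mul_le_mul_of_nonneg_left (h3 i) (hwpos i)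
      _ = 2 * Lc * ∑ i, w i * (Lf i (θ i) - Lf i (θistar i)) := by
          rw [Finset.mul_sum]; exact Finset.sum_congr rfl fun i _ => by ring
  have hψjensen : ‖ψ - θstar‖ ^ 2 ≤ ∑ i, w i * ‖θ i - θstar‖ ^ 2 := by
    have heq : ψ - θstar = ∑ i, w i • (θ i - θstar) := by
      rw [hψ]
      rw [Finset.sum_congr rfl (fun i _ => smul_sub (w i) (θ i) θstar)]
      rw [Finset.sum_sub_distrib, ← Finset.sum_smul, hw1, one_smul]
    rw [heq]
    exact jensen_norm_sq w hwpos hw1 _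
  -- expansion
  have hexp : ‖ψ - η • g - θstar‖ ^ 2
      = ‖ψ - θstar‖ ^ 2 + (∑ i, w i * (-(2 * η) * ⟪v i, ψ - θstar⟫)) + η ^ 2 * ‖g‖ ^ 2 := by
    have h0 : ψ - η • g - θstar = (ψ - θstar) - η • g := by abel
    rw [h0, norm_sub_sq_real]
    have hinner : ⟪ψ - θstar, η • g⟫ = η * ⟪g, ψ - θstar⟫ := by
      rw [real_inner_smul_right, real_inner_comm]
    have hgin : ⟪g, ψ - θstar⟫ = ∑ i, w i * ⟪v i, ψ - θstar⟫ := by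
      rw [hg, sum_inner]
      exact Finset.sum_congr rfl fun i _ => real_inner_smul_left _ _ _
    have hn : ‖η • g‖ ^ 2 = η ^ 2 * ‖g‖ ^ 2 := by
      rw [norm_smul, mul_pow, Real.norm_eq_abs, sq_abs]
    rw [hinner, hgin, hn, Finset.mul_sum, Finset.mul_sum]
    rw [sub_eq_add_neg, ← Finset.sum_neg_distrib]
    congr 2
    exact Finset.sum_congr rfl fun i _ => by ring
  -- sum of key
  have hsumkey : (∑ i, w i * (-(2 * η) * ⟪v i, ψ - θstar⟫)) ≤
      2 * η ^ 2 * Lc * (∑ i, w i * (Lf i (θ i) - Lf i (θistar i)))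
      + (∑ i, w i * ‖ψ - θ i‖ ^ 2)
      - 2 * η * (∑ i, w i * (Lf i (θ i) - Lf i θstar))
      - η * μ * (∑ i, w i * ‖θ i - θstar‖ ^ 2) := by
    calc (∑ i, w i * (-(2 * η) * ⟪v i, ψ - θstar⟫))
        ≤ ∑ i, w i * (2 * η ^ 2 * Lc * (Lf i (θ i) - Lf i (θistar i)) + ‖ψ - θ i‖ ^ 2
            - 2 * η * (Lf i (θ i) - Lf i θstar) - η * μ * ‖θ i - θstar‖ ^ 2) :=
          Finset.sum_le_sum fun i _ => key i
      _ = _ := by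
          simp only [Finset.mul_sum]
          rw [← Finset.sum_add_distrib, ← Finset.sum_sub_distrib, ← Finset.sum_sub_distrib]
          exact Finset.sum_congr rfl fun i _ => by ring
  have hημ : (0:ℝ) ≤ η * μ := mul_nonneg hη.le hμ.le
  have hfin := mul_le_mul_of_nonneg_left hψjensen hημ
  have hg2 := mul_le_mul_of_nonneg_left hgbound2 (sq_nonneg η)
  rw [hexp]
  linarith [hsumkey, hfin, hg2]
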